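/- Let f : ℝ_{>0}^K → ℝ_{>0}^K be a standard interference function, i.e., (positivity) f(d) > 0 componentwise for all d > 0; (monotonicity) d ≥ d' componentwise implies f(d) ≥ f(d') componentwise; (scalability) for all ζ > 1 and all d, ζ·f(d) > f(ζ·d) componentwise. If f has a fixed point, then this fixed point is unique. -/

import Mathlib

theorem stmt6_aux {K : ℕ} (f : (Fin K → ℝ) → (Fin K → ℝ))
    (hmono : ∀ d d' : Fin K → ℝ, (∀ i, 0 < d' i) → (∀ i, 0 < d i) →
      (∀ i, d' i ≤ d i) → ∀ i, f d' i ≤ f d i)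
    (hscal : ∀ ζ : ℝ, 1 < ζ → ∀ d : Fin K → ℝ, (∀ i, 0 < d i) →
      ∀ i, f (ζ • d) i < ζ * f d i)
    (d d' : Fin K → ℝ) (hd : ∀ i, 0 < d i) (hd' : ∀ i, 0 < d' i)
    (hfix : f d = d) (hfix' : f d' = d') :
    ∀ i, d i ≤ d' i := by
  by_contra h
  push_neg at h
  obtain ⟨i0, hi0⟩ := h
  have hne : (Finset.univ : Finset (Fin K)).Nonempty := ⟨i0, Finset.mem_univ _⟩
  obtain ⟨j, -, hj⟩ := Finset.exists_max_image Finset.univ (fun i => d i / d' i) hne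
  set ζ := d j / d' j with hζdef
  have hζ1 : 1 < ζ :=
    lt_of_lt_of_le ((one_lt_div (hd' i0)).2 hi0) (hj i0 (Finset.mem_univ _))
  have hle : ∀ i, d i ≤ (ζ • d') i := by
    intro i
    have h1 := hj i (Finset.mem_univ _)
    have : d i ≤ ζ * d' i := by
      calc d i = (d i / d' i) * d' i := (div_mul_cancel₀ _ (hd' i).ne').symm
        _ ≤ ζ * d' i := mul_le_mul_of_nonneg_right h1 (hd' i).le
    simpa [Pi.smul_apply, smul_eq_mul] using this
  have hpos' : ∀ i, 0 < (ζ • d') i := by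
    intro i
    simpa [Pi.smul_apply, smul_eq_mul] using mul_pos (lt_trans one_pos hζ1) (hd' i)
  have h1 : f d j ≤ f (ζ • d') j := hmono (ζ • d') d hd hpos' hle j
  have h2 : f (ζ • d') j < ζ * f d' j := hscal ζ hζ1 d' hd' j
  have heq : ζ * d' j = d j := by
    have : d' j ≠ 0 := (hd' j).ne'
    rw [hζdef, div_mul_cancel₀ _ this]
  have : d j < d j := by
    calc d j = f d j := by rw [hfix]
      _ ≤ f (ζ • d') j := h1
      _ < ζ * f d' j := h2
      _ = ζ * d' j := by rw [hfix']
      _ = d j := heq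
  exact lt_irrefl _ this

/-- Yates' framework: a standard interference function (positive, monotone, scalable on the
positive orthant) has at most one fixed point with positive components. -/
theorem stmt6 {K : ℕ} (f : (Fin K → ℝ) → (Fin K → ℝ))
    (hpos : ∀ d : Fin K → ℝ, (∀ i, 0 < d i) → ∀ i, 0 < f d i)
    (hmono : ∀ d d' : Fin K → ℝ, (∀ i, 0 < d' i) → (∀ i, 0 < d i) →
      (∀ i, d' i ≤ d i) → ∀ i, f d' i ≤ f d i)
    (hscal : ∀ ζ : ℝ, 1 < ζ → ∀ d : Fin K → ℝ, (∀ i, 0 < d i) →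
      ∀ i, f (ζ • d) i < ζ * f d i)
    (d d' : Fin K → ℝ) (hd : ∀ i, 0 < d i) (hd' : ∀ i, 0 < d' i)
    (hfix : f d = d) (hfix' : f d' = d') :
    d = d' := by
  funext i
  exact le_antisymm (stmt6_aux f hmono hscal d d' hd hd' hfix hfix' i)
    (stmt6_aux f hmono hscal d' d hd' hd hfix' hfix i)
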